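/- The Drinfeld–Vladut bound: A(q) ≤ √q − 1 for every prime power q. -/

import Mathlib

open Filter

section DVAux

open Finset

private lemma dv_sum_sub_eq (f : ℕ → ℝ) (n : ℕ) :
    ∑ r ∈ Finset.range n, f (n - r) = ∑ k ∈ Finset.range n, f (k + 1) := by
  rw [← Finset.sum_range_reflect (fun k => f (k + 1)) n]
  apply Finset.sum_congr rfl
  intro j hj
  congr 1
  have := Finset.mem_range.mp hj
  omega

private lemma dv_dist_double_sum (f : ℕ → ℝ) (n : ℕ) :
    ∑ r ∈ Finset.range n, ∑ s ∈ Finset.range n, f (Nat.dist r s)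
      = 2 * ∑ k ∈ Finset.range n, ((n : ℝ) - k) * f k - n * f 0 := by
  induction n with
  | zero => simp
  | succ n ih =>
    have hd : ∀ r ∈ Finset.range n, f (Nat.dist r n) = f (n - r) := by
      intro r hr
      rw [Nat.dist_eq_sub_of_le (Finset.mem_range.mp hr).le]
    have hd' : ∀ s ∈ Finset.range n, f (Nat.dist n s) = f (n - s) := by
      intro s hs
      rw [Nat.dist_comm, Nat.dist_eq_sub_of_le (Finset.mem_range.mp hs).le]
    have e1 : ∑ r ∈ Finset.range (n+1), ∑ s ∈ Finset.range (n+1), f (Nat.dist r s)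
        = (∑ r ∈ Finset.range n, ∑ s ∈ Finset.range n, f (Nat.dist r s))
          + 2 * (∑ k ∈ Finset.range n, f (k + 1)) + f 0 := by
      rw [Finset.sum_range_succ]
      have : ∀ r ∈ Finset.range n, ∑ s ∈ Finset.range (n+1), f (Nat.dist r s)
          = (∑ s ∈ Finset.range n, f (Nat.dist r s)) + f (Nat.dist r n) := by
        intro r _; rw [Finset.sum_range_succ]
      rw [Finset.sum_congr rfl this, Finset.sum_add_distrib, Finset.sum_range_succ,
        Finset.sum_congr rfl hd, Finset.sum_congr rfl hd', dv_sum_sub_eq,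
        Nat.dist_self]
      ring
    have e2 : ∑ k ∈ Finset.range (n+1), (((n:ℝ) + 1) - k) * f k
        = (∑ k ∈ Finset.range n, ((n : ℝ) - k) * f k)
          + ((f 0) + ∑ k ∈ Finset.range n, f (k + 1)) := by
      have : ∀ k, (((n:ℝ) + 1) - k) * f k = ((n : ℝ) - k) * f k + f k := by
        intro k; ring
      rw [Finset.sum_congr rfl (fun k _ => this k), Finset.sum_add_distrib,
        Finset.sum_range_succ' (fun k => f k) n]
      have hn : ((n:ℝ) - n) * f n = 0 := by simp
      rw [Finset.sum_range_succ, hn]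
      ring
    rw [e1, ih]
    push_cast
    rw [e2]
    ring

private lemma dv_pow_conj_le {β : ℂ} (hβ : ‖β‖ = 1) {s r : ℕ} (h : s ≤ r) :
    β ^ r * (starRingEnd ℂ) (β ^ s) = β ^ (r - s) := by
  have h1 : β ^ r = β ^ (r - s) * β ^ s := by
    rw [← pow_add]; congr 1; omega
  have h2 : β ^ s * (starRingEnd ℂ) (β ^ s) = 1 := by
    rw [Complex.mul_conj]
    norm_cast
    rw [Complex.normSq_eq_norm_sq, norm_pow, hβ, one_pow, one_pow]
  calc β ^ r * (starRingEnd ℂ) (β ^ s)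
      = β ^ (r - s) * (β ^ s * (starRingEnd ℂ) (β ^ s)) := by rw [h1]; ring
    _ = β ^ (r - s) := by rw [h2, mul_one]

private lemma dv_re_pow_conj {β : ℂ} (hβ : ‖β‖ = 1) (r s : ℕ) :
    (β ^ r * (starRingEnd ℂ) (β ^ s)).re = (β ^ Nat.dist r s).re := by
  rcases le_total s r with h | h
  · rw [dv_pow_conj_le hβ h, Nat.dist_eq_sub_of_le_right h]
  · have : β ^ r * (starRingEnd ℂ) (β ^ s)
        = (starRingEnd ℂ) (β ^ s * (starRingEnd ℂ) (β ^ r)) := by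
      rw [map_mul, Complex.conj_conj]; ring
    rw [this, Complex.conj_re, dv_pow_conj_le hβ h, Nat.dist_eq_sub_of_le h]

private lemma dv_normSq_eq_double_sum {β : ℂ} (hβ : ‖β‖ = 1) (n : ℕ) :
    Complex.normSq (∑ r ∈ Finset.range n, β ^ r)
      = ∑ r ∈ Finset.range n, ∑ s ∈ Finset.range n, (β ^ Nat.dist r s).re := by
  have h1 : (Complex.normSq (∑ r ∈ Finset.range n, β ^ r) : ℂ)
      = (∑ r ∈ Finset.range n, β ^ r) * (starRingEnd ℂ) (∑ s ∈ Finset.range n, β ^ s) :=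
    (Complex.mul_conj _).symm
  have h2 : Complex.normSq (∑ r ∈ Finset.range n, β ^ r)
      = ((∑ r ∈ Finset.range n, β ^ r) * (starRingEnd ℂ) (∑ s ∈ Finset.range n, β ^ s)).re := by
    rw [← h1, Complex.ofReal_re]
  rw [h2, map_sum, Finset.sum_mul_sum, Complex.re_sum]
  refine Finset.sum_congr rfl fun r _ => ?_
  rw [Complex.re_sum]
  exact Finset.sum_congr rfl fun s _ => dv_re_pow_conj hβ r s

private lemma dv_triple_sum_nonneg {M : ℕ} (β : Fin M → ℂ)
    (hβ : ∀ i, ‖β i‖ = 1) (n : ℕ) :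
    0 ≤ ∑ r ∈ Finset.range n, ∑ s ∈ Finset.range n, ∑ i, (β i ^ Nat.dist r s).re := by
  have step : ∑ r ∈ Finset.range n, ∑ s ∈ Finset.range n, ∑ i, (β i ^ Nat.dist r s).re
      = ∑ i, ∑ r ∈ Finset.range n, ∑ s ∈ Finset.range n, (β i ^ Nat.dist r s).re := by
    rw [Finset.sum_congr rfl fun r (_ : r ∈ Finset.range n) =>
      (Finset.sum_comm (s := Finset.range n) (t := Finset.univ)
        (f := fun s i => (β i ^ Nat.dist r s).re)),
      Finset.sum_comm]
  rw [step]
  refine Finset.sum_nonneg fun i _ => ?_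
  rw [← dv_normSq_eq_double_sum (hβ i)]
  exact Complex.normSq_nonneg _

private lemma dv_tendsto_ratio (sq : ℝ) (hsq : 1 < sq) :
    Tendsto (fun m : ℕ => ((m:ℝ) + 1) / ∑ k ∈ Finset.range m, ((m:ℝ) - k) * sq⁻¹ ^ (k+1))
      atTop (nhds (sq - 1)) := by
  set t : ℝ := sq⁻¹ with htdef
  have hsq0 : 0 < sq := lt_trans one_pos hsq
  have ht0 : 0 < t := inv_pos.mpr hsq0
  have ht1 : t < 1 := by
    rw [htdef, inv_lt_one_iff₀]; right; exact hsq
  set S : ℕ → ℝ := fun m => ∑ k ∈ Finset.range m, ((m:ℝ) - k) * t ^ (k+1) with hSdef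
  set σ : ℕ → ℝ := fun m => ∑ k ∈ Finset.range m, t ^ (k+1) with hσdef
  set A : ℕ → ℝ := fun m => ∑ k ∈ Finset.range m, ((k:ℝ) + 1) * t ^ (k+1) with hAdef
  have hS : ∀ m, S m = ((m:ℝ) + 1) * σ m - A m := by
    intro m
    rw [hSdef, hσdef, hAdef]
    simp only
    rw [Finset.mul_sum, ← Finset.sum_sub_distrib]
    exact Finset.sum_congr rfl fun k _ => by ring
  have hgeom : Tendsto (fun m : ℕ => ∑ k ∈ Finset.range m, t ^ k) atTop (nhds (1 - t)⁻¹) :=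
    (hasSum_geometric_of_lt_one ht0.le ht1).tendsto_sum_nat
  have hσt : Tendsto σ atTop (nhds (t * (1 - t)⁻¹)) := by
    have hre : σ = fun m => t * ∑ k ∈ Finset.range m, t ^ k := by
      funext m
      rw [hσdef, Finset.mul_sum]
      exact Finset.sum_congr rfl fun k _ => by rw [pow_succ']
    rw [hre]
    exact hgeom.const_mul t
  have hA_sum : HasSum (fun n : ℕ => (n:ℝ) * t ^ n) (t / (1 - t) ^ 2) :=
    hasSum_coe_mul_geometric_of_norm_lt_one (by rwa [Real.norm_eq_abs, abs_of_pos ht0])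
  have hA_bd : ∀ m, A m ≤ t / (1 - t) ^ 2 := by
    intro m
    have hre : A m = ∑ n ∈ Finset.range (m+1), (n:ℝ) * t ^ n := by
      rw [Finset.sum_range_succ' (fun n => (n:ℝ) * t ^ n) m, hAdef]
      push_cast
      simp
    rw [hre]
    exact sum_le_hasSum _ (fun n _ => by positivity) hA_sum
  have hm1 : Tendsto (fun m : ℕ => (m:ℝ) + 1) atTop atTop :=
    tendsto_atTop_add_const_right _ 1 tendsto_natCast_atTop_atTop
  have hAz : Tendsto (fun m : ℕ => A m / ((m:ℝ) + 1)) atTop (nhds 0) := by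
    apply squeeze_zero (g := fun m : ℕ => (t / (1 - t) ^ 2) / ((m:ℝ) + 1))
    · intro m
      have : 0 ≤ A m := Finset.sum_nonneg fun k _ => by positivity
      positivity
    · intro m
      have hAm : A m ≤ t / (1 - t) ^ 2 := hA_bd m
      gcongr
    · exact Tendsto.div_atTop tendsto_const_nhds hm1
  have hRt : Tendsto (fun m : ℕ => S m / ((m:ℝ) + 1)) atTop (nhds (t * (1 - t)⁻¹)) := by
    have hre : (fun m : ℕ => S m / ((m:ℝ) + 1))
        = fun m : ℕ => σ m - A m / ((m:ℝ) + 1) := by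
      funext m
      have hm0 : ((m:ℝ) + 1) ≠ 0 := by positivity
      rw [hS m]
      field_simp
    rw [hre]
    have := hσt.sub hAz
    rwa [sub_zero] at this
  have hlim_ne : t * (1 - t)⁻¹ ≠ 0 := by
    have : 0 < 1 - t := by linarith
    positivity
  have hfinal := hRt.inv₀ hlim_ne
  have hre2 : (fun m : ℕ => (S m / ((m:ℝ) + 1))⁻¹)
      = fun m : ℕ => ((m:ℝ) + 1) / S m := by
    funext m; rw [inv_div]
  rw [hre2] at hfinal
  have hval : (t * (1 - t)⁻¹)⁻¹ = sq - 1 := by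
    rw [mul_inv, inv_inv, htdef, inv_inv]
    field_simp
  rwa [hval] at hfinal

end DVAux

/-- The numerical data attached to a smooth projective absolutely irreducible curve `C`
of genus `g` over the finite field `F_q` by the Weil conjectures: `α i` are the Frobenius
eigenvalues, of absolute value `√q`; `N r` is the number of `F_{q^r}`-rational points,
given by `N r = q^r + 1 − ∑ i, (α i)^r`; and `a d` is the (nonnegative) number of closed
points (places) of degree `d`, so that `N r = ∑_{d ∣ r} d · a d`. -/
structure WeilCurveData (q : ℕ) where
  /-- the genus of the curve -/
  g : ℕ
  /-- `N r` is the number of `F_{q^r}`-rational points -/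
  N : ℕ → ℕ
  /-- `a d` is the number of closed points of degree `d` -/
  a : ℕ → ℕ
  /-- the Frobenius eigenvalues -/
  α : Fin (2 * g) → ℂ
  habs : ∀ i, ‖α i‖ = Real.sqrt q
  hN : ∀ r, 0 < r → (N r : ℂ) = (q : ℂ) ^ r + 1 - ∑ i, α i ^ r
  hdiv : ∀ r, 0 < r → N r = ∑ d ∈ r.divisors, d * a d

private lemma dv_weil_N_le (q : ℕ) (W : WeilCurveData q) {k : ℕ} (hk : 0 < k) :
    W.N 1 ≤ W.N k := by
  rw [W.hdiv 1 one_pos, W.hdiv k hk]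
  have h1 : ∑ d ∈ Nat.divisors 1, d * W.a d = 1 * W.a 1 := by
    simp [Nat.divisors_one]
  rw [h1]
  exact Finset.single_le_sum (f := fun d => d * W.a d) (fun i _ => Nat.zero_le _)
    (Nat.one_mem_divisors.mpr hk.ne')

private lemma dv_curve_ineq (q : ℕ) (hq : 1 < q) (W : WeilCurveData q) (m : ℕ) :
    (W.N 1 : ℝ) * (∑ k ∈ Finset.range m, ((m:ℝ) - k) * (Real.sqrt q)⁻¹ ^ (k+1))
      ≤ ((m:ℝ) + 1) * W.g
        + ∑ k ∈ Finset.range m,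
            ((m:ℝ) - k) * ((Real.sqrt q) ^ (k+1) + (Real.sqrt q)⁻¹ ^ (k+1)) := by
  set sq : ℝ := Real.sqrt q with hsqdef
  have hq0 : (0:ℝ) ≤ q := by positivity
  have hsq1 : 1 < sq := by
    rw [hsqdef, show (1:ℝ) = Real.sqrt 1 by simp]
    exact Real.sqrt_lt_sqrt (by norm_num) (by exact_mod_cast hq)
  have hsq0 : 0 < sq := lt_trans one_pos hsq1
  set t : ℝ := sq⁻¹ with htdef
  have ht0 : 0 < t := inv_pos.mpr hsq0
  have hqsq : (q:ℝ) = sq ^ 2 := (Real.sq_sqrt hq0).symm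
  set β : Fin (2 * W.g) → ℂ := fun i => W.α i / (sq : ℂ) with hβdef
  have hβ : ∀ i, ‖β i‖ = 1 := by
    intro i
    rw [hβdef]
    simp only [norm_div, W.habs i, Complex.norm_real, Real.norm_eq_abs, abs_of_pos hsq0]
    exact div_self hsq0.ne'
  set d : ℕ → ℝ := fun k => ∑ i, (β i ^ k).re with hddef
  have hd0 : d 0 = 2 * W.g := by
    simp [hddef]
  have hdk : ∀ k : ℕ, 0 < k → d k = ((q:ℝ) ^ k + 1 - W.N k) * t ^ k := by
    intro k hk
    have hsum : ∑ i, β i ^ k = (((q:ℝ) ^ k + 1 - W.N k : ℝ) : ℂ) / ((sq ^ k : ℝ) : ℂ) := by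
      rw [hβdef]
      simp only [div_pow, ← Finset.sum_div]
      have : ∑ i, W.α i ^ k = (q : ℂ) ^ k + 1 - W.N k := by
        have := W.hN k hk
        linear_combination this
      rw [this]
      push_cast
      ring
    have : d k = ((((q:ℝ) ^ k + 1 - W.N k : ℝ) : ℂ) / ((sq ^ k : ℝ) : ℂ)).re := by
      rw [hddef]
      simp only [← Complex.re_sum]
      rw [hsum]
    rw [this, Complex.div_ofReal_re, Complex.ofReal_re, div_eq_mul_inv, htdef, ← inv_pow]
  have hdbound : ∀ k : ℕ, -(d (k+1)) ≥ (W.N 1 : ℝ) * t ^ (k+1) - (sq ^ (k+1) + t ^ (k+1)) := by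
    intro k
    have hk : 0 < k + 1 := Nat.succ_pos k
    rw [hdk (k+1) hk]
    have hN : (W.N 1 : ℝ) ≤ W.N (k+1) := by exact_mod_cast dv_weil_N_le q W hk
    have hqt : (q:ℝ) ^ (k+1) * t ^ (k+1) = sq ^ (k+1) := by
      rw [hqsq, htdef, ← mul_pow]
      congr 1
      rw [pow_two, mul_inv_cancel_right₀ hsq0.ne']
    nlinarith [pow_pos ht0 (k+1), mul_le_mul_of_nonneg_right hN (le_of_lt (pow_pos ht0 (k+1)))]
  have hpos := dv_triple_sum_nonneg β hβ (m+1)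
  have hidentity := dv_dist_double_sum d (m+1)
  have hps : (0:ℝ) ≤ 2 * ∑ k ∈ Finset.range (m+1), (((m:ℝ)+1) - k) * d k - ((m:ℝ)+1) * d 0 := by
    have : ∑ r ∈ Finset.range (m+1), ∑ s ∈ Finset.range (m+1), ∑ i, (β i ^ Nat.dist r s).re
        = ∑ r ∈ Finset.range (m+1), ∑ s ∈ Finset.range (m+1), d (Nat.dist r s) := rfl
    rw [this, hidentity] at hpos
    convert hpos using 3 <;> push_cast <;> ring
  have hsplit : ∑ k ∈ Finset.range (m+1), (((m:ℝ)+1) - k) * d k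
      = (∑ k ∈ Finset.range m, ((m:ℝ) - k) * d (k+1)) + ((m:ℝ)+1) * d 0 := by
    rw [Finset.sum_range_succ' (fun k => (((m:ℝ)+1) - k) * d k) m]
    congr 1
    · refine Finset.sum_congr rfl fun k _ => ?_
      push_cast; ring
    · norm_num
  have hmain : -(∑ k ∈ Finset.range m, ((m:ℝ) - k) * d (k+1)) ≤ ((m:ℝ)+1) * W.g := by
    rw [hsplit, hd0] at hps
    nlinarith
  have hlb : (W.N 1 : ℝ) * (∑ k ∈ Finset.range m, ((m:ℝ) - k) * t ^ (k+1))
        - ∑ k ∈ Finset.range m, ((m:ℝ) - k) * (sq ^ (k+1) + t ^ (k+1))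
      ≤ -(∑ k ∈ Finset.range m, ((m:ℝ) - k) * d (k+1)) := by
    rw [Finset.mul_sum, ← Finset.sum_sub_distrib, ← Finset.sum_neg_distrib]
    refine Finset.sum_le_sum fun k hk => ?_
    have hmk : (0:ℝ) ≤ (m:ℝ) - k := by
      have h1 := Finset.mem_range.mp hk
      have : (k:ℝ) < m := by exact_mod_cast h1
      linarith
    have := hdbound k
    nlinarith
  linarith

/-- **The Drinfeld–Vladut bound** `A(q) ≤ √q − 1`: for every sequence of (smooth projective
absolutely irreducible) curves over `F_q` whose genera tend to infinity, the limsup of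
(number of `F_q`-rational points)/(genus) is at most `√q − 1`; equivalently,
`A(q) = limsup_{g → ∞} N_q(g)/g ≤ √q − 1`. -/
theorem drinfeld_vladut_bound (p n q : ℕ) (hp : p.Prime) (hn : 0 < n) (hq : q = p ^ n)
    (C : ℕ → WeilCurveData q)
    (hg : Tendsto (fun i => (C i).g) atTop atTop) :
    limsup (fun i => ((C i).N 1 : ℝ) / ((C i).g : ℝ)) atTop ≤ Real.sqrt q - 1 := by
  have hq1 : 1 < q := by
    rw [hq]
    exact Nat.one_lt_pow hn.ne' hp.one_lt
  set sq : ℝ := Real.sqrt q with hsqdef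
  have hq0 : (0:ℝ) ≤ q := by positivity
  have hsq1 : 1 < sq := by
    rw [hsqdef, show (1:ℝ) = Real.sqrt 1 by simp]
    exact Real.sqrt_lt_sqrt (by norm_num) (by exact_mod_cast hq1)
  set t : ℝ := sq⁻¹ with htdef
  have ht0 : 0 < t := inv_pos.mpr (lt_trans one_pos hsq1)
  set S : ℕ → ℝ := fun m => ∑ k ∈ Finset.range m, ((m:ℝ) - k) * t ^ (k+1) with hSdef
  set T : ℕ → ℝ := fun m =>
    ∑ k ∈ Finset.range m, ((m:ℝ) - k) * (sq ^ (k+1) + t ^ (k+1)) with hTdef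
  set f : ℕ → ℝ := fun i => ((C i).N 1 : ℝ) / ((C i).g : ℝ) with hfdef
  have hf0 : ∀ i, 0 ≤ f i := fun i => by positivity
  have hSpos : ∀ m : ℕ, 1 ≤ m → 0 < S m := by
    intro m hm
    rw [hSdef]
    apply Finset.sum_pos
    · intro k hk
      have h1 := Finset.mem_range.mp hk
      have h2 : (k:ℝ) < m := by exact_mod_cast h1
      have h3 : 0 < (m:ℝ) - k := by linarith
      positivity
    · exact Finset.nonempty_range_iff.mpr (by omega)
  have hTnn : ∀ m : ℕ, 0 ≤ T m := by
    intro m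
    rw [hTdef]
    apply Finset.sum_nonneg
    intro k hk
    have h1 := Finset.mem_range.mp hk
    have h2 : (k:ℝ) < m := by exact_mod_cast h1
    have h3 : 0 ≤ (m:ℝ) - k := by linarith
    have h4 : 0 < sq := lt_trans one_pos hsq1
    positivity
  -- key bound for each m ≥ 1
  have key : ∀ m : ℕ, 1 ≤ m → limsup f atTop ≤ ((m:ℝ) + 1) / S m := by
    intro m hm
    have hSm := hSpos m hm
    set c : ℝ := ((m:ℝ) + 1) / S m with hcdef
    set b : ℝ := T m / S m with hbdef
    have hb : 0 ≤ b := div_nonneg (hTnn m) hSm.le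
    have hev : ∀ᶠ i in atTop, f i ≤ c + b / ((C i).g : ℝ) := by
      filter_upwards [hg.eventually_ge_atTop 1] with i hi
      have hgi : (0:ℝ) < ((C i).g : ℝ) := by exact_mod_cast hi
      have hci := dv_curve_ineq q hq1 (C i) m
      have hNb : ((C i).N 1 : ℝ) ≤ c * ((C i).g : ℝ) + b := by
        have heq : c * ((C i).g : ℝ) + b = (((m:ℝ) + 1) * ((C i).g : ℝ) + T m) / S m := by
          rw [hcdef, hbdef]
          field_simp
        rw [heq, le_div_iff₀ hSm]
        calc ((C i).N 1 : ℝ) * S m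
            = ((C i).N 1 : ℝ) * (∑ k ∈ Finset.range m, ((m:ℝ) - k) * t ^ (k+1)) := by
              rw [hSdef]
          _ ≤ ((m:ℝ) + 1) * ((C i).g : ℝ) + T m := by
              rw [hTdef]; exact hci
      have : f i = ((C i).N 1 : ℝ) / ((C i).g : ℝ) := rfl
      rw [this]
      calc ((C i).N 1 : ℝ) / ((C i).g : ℝ)
          ≤ (c * ((C i).g : ℝ) + b) / ((C i).g : ℝ) := by gcongr
        _ = c + b / ((C i).g : ℝ) := by
            rw [add_div, mul_div_cancel_right₀ _ hgi.ne']
    have hgtop : Tendsto (fun i => ((C i).g : ℝ)) atTop atTop :=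
      tendsto_natCast_atTop_atTop.comp hg
    have htendsto : Tendsto (fun i => c + b / ((C i).g : ℝ)) atTop (nhds c) := by
      have h1 : Tendsto (fun i => b / ((C i).g : ℝ)) atTop (nhds 0) :=
        Tendsto.div_atTop tendsto_const_nhds hgtop
      have h2 := (tendsto_const_nhds (x := c) (f := atTop)).add h1
      rwa [add_zero] at h2
    calc limsup f atTop
        ≤ limsup (fun i => c + b / ((C i).g : ℝ)) atTop := by
          exact Filter.limsup_le_limsup hev
            (Filter.IsBoundedUnder.isCoboundedUnder_le
              (Filter.isBoundedUnder_of ⟨0, fun i => hf0 i⟩))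
            htendsto.isBoundedUnder_le
      _ = c := htendsto.limsup_eq
  have hratio := dv_tendsto_ratio sq hsq1
  refine ge_of_tendsto hratio ?_
  filter_upwards [eventually_ge_atTop 1] with m hm
  exact key m hm
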